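/- For every integer l ≥ 1, the graph energy of the path on 2l+1 vertices equals 2(cot(π/(4l+4)) − 1). -/

import Mathlib

open Real

private lemma path_det_eq_prod {n : Type*} [Fintype n] [DecidableEq n]
    (A : Matrix n n ℝ) (hH : A.IsHermitian) (x : ℝ) :
    (x • (1 : Matrix n n ℝ) - A).det = ∏ i, (x - hH.eigenvalues i) := by
  have h := hH.spectral_theorem
  set U := (hH.eigenvectorUnitary : Matrix n n ℝ) with hUdef
  have hU1 : U * star U = 1 := Matrix.mem_unitaryGroup_iff.mp hH.eigenvectorUnitary.2
  have hU2 : star U * U = 1 := Matrix.mem_unitaryGroup_iff'.mp hH.eigenvectorUnitary.2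
  have hdiag : (RCLike.ofReal ∘ hH.eigenvalues : n → ℝ) = hH.eigenvalues := by
    ext i; simp
  rw [hdiag, Unitary.conjStarAlgAut_apply] at h
  have key : x • (1 : Matrix n n ℝ) - A
      = U * (x • 1 - Matrix.diagonal hH.eigenvalues) * star U := by
    rw [mul_sub, sub_mul, ← h]
    congr 1
    rw [mul_smul_comm, smul_mul_assoc, mul_one, hU1]
  rw [key, Matrix.det_mul, Matrix.det_mul, mul_comm, ← mul_assoc, ← Matrix.det_mul, hU2,
    Matrix.det_one, one_mul]
  rw [Matrix.smul_one_eq_diagonal, Matrix.diagonal_sub, Matrix.det_diagonal]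

private lemma path_eigenvector (l : ℕ) (hl : 1 ≤ l)
    (A : Matrix (Fin (2 * l + 1)) (Fin (2 * l + 1)) ℝ)
    (hA : ∀ i j : Fin (2 * l + 1),
      A i j = if i.1 + 1 = j.1 ∨ j.1 + 1 = i.1 then 1 else 0)
    (h : ℕ) (h1 : 1 ≤ h) (h2 : h ≤ 2 * l + 1) :
    ∃ v : Fin (2 * l + 1) → ℝ, v ≠ 0 ∧
      ((2 * Real.cos (h * π / (2 * l + 2))) • (1 : Matrix _ _ ℝ) - A).mulVec v = 0 := by
  set α : ℝ := h * π / (2 * l + 2) with hα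
  have hπpos : (0:ℝ) < π := Real.pi_pos
  have hh1 : (1:ℝ) ≤ (h:ℝ) := by exact_mod_cast h1
  have hh2 : (h:ℝ) ≤ 2 * l + 1 := by exact_mod_cast h2
  have hden : (0:ℝ) < 2 * l + 2 := by positivity
  have hαpos : (0:ℝ) < α := by
    rw [hα]; apply div_pos (by nlinarith) hden
  have hαlt : α < π := by
    rw [hα, div_lt_iff₀ hden]; nlinarith
  set w : ℕ → ℝ := fun m => Real.sin (m * α) with hw
  have hrec : ∀ m : ℕ, w m + w (m + 2) = 2 * Real.cos α * w (m + 1) := by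
    intro m
    have e1 : ((m:ℝ) + 2) * α = ((m:ℝ) + 1) * α + α := by ring
    have e2 : (m:ℝ) * α = ((m:ℝ) + 1) * α - α := by ring
    simp only [hw]
    push_cast
    rw [e1, e2, Real.sin_add, Real.sin_sub]
    ring
  have hw0 : w 0 = 0 := by simp [hw]
  have hwtop : w (2 * l + 2) = 0 := by
    have : ((2 * l + 2 : ℕ) : ℝ) * α = h * π := by
      rw [hα]; push_cast; field_simp
    simp only [hw, this]
    simpa [mul_comm] using Real.sin_nat_mul_pi h
  refine ⟨fun j => w (j.1 + 1), ?_, ?_⟩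
  · intro hv
    have h0 := congrFun hv ⟨0, by omega⟩
    simp only [hw, Pi.zero_apply, Nat.cast_one, zero_add, Nat.cast_ofNat] at h0
    have := Real.sin_pos_of_pos_of_lt_pi hαpos hαlt
    rw [one_mul] at h0
    linarith
  · funext j
    simp only [Matrix.mulVec, dotProduct, Matrix.sub_apply, Matrix.smul_apply,
      Matrix.one_apply, smul_eq_mul, Pi.zero_apply, sub_mul, ite_mul, one_mul, zero_mul,
      mul_ite, mul_one, mul_zero, Finset.sum_sub_distrib, Finset.sum_ite_eq]
    have hsum : ∑ k : Fin (2 * l + 1), A j k * w (k.1 + 1) = w j.1 + w (j.1 + 2) := by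
      have : ∀ k : Fin (2 * l + 1), A j k * w (k.1 + 1) =
          (if j.1 + 1 = k.1 then w (k.1 + 1) else 0) +
          (if k.1 + 1 = j.1 then w (k.1 + 1) else 0) := by
        intro k
        rw [hA]
        by_cases hc1 : j.1 + 1 = k.1 <;> by_cases hc2 : k.1 + 1 = j.1 <;>
          simp [hc1, hc2] <;> omega
      rw [Finset.sum_congr rfl (fun k _ => this k), Finset.sum_add_distrib]
      have s1 : ∑ k : Fin (2 * l + 1), (if j.1 + 1 = k.1 then w (k.1 + 1) else 0)
          = w (j.1 + 2) := by
        rw [Fin.sum_univ_eq_sum_range (fun m => if j.1 + 1 = m then w (m + 1) else 0)]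
        rw [Finset.sum_ite_eq (Finset.range (2 * l + 1)) (j.1 + 1) (fun m => w (m + 1))]
        by_cases hj : j.1 + 1 ∈ Finset.range (2 * l + 1)
        · simp [hj]
        · have : j.1 = 2 * l := by have := j.2; simp [Finset.mem_range] at hj; omega
          simp [hj, this, hwtop]
      have s2 : ∑ k : Fin (2 * l + 1), (if k.1 + 1 = j.1 then w (k.1 + 1) else 0) = w j.1 := by
        rw [Fin.sum_univ_eq_sum_range (fun m => if m + 1 = j.1 then w (m + 1) else 0)]
        by_cases hj : 1 ≤ j.1
        · have heq : ∀ m ∈ Finset.range (2 * l + 1),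
              (if m + 1 = j.1 then w (m + 1) else 0) = (if j.1 - 1 = m then w (m + 1) else 0) := by
            intro m _; congr 1; · simp only [eq_iff_iff]; omega
          rw [Finset.sum_congr rfl heq,
            Finset.sum_ite_eq (Finset.range (2 * l + 1)) (j.1 - 1) (fun m => w (m + 1))]
          have hmem : j.1 - 1 ∈ Finset.range (2 * l + 1) := by
            simp only [Finset.mem_range]; have := j.2; omega
          simp only [hmem, if_true]
          congr 1; omega
        · have hj0 : j.1 = 0 := by omega
          have : ∀ m ∈ Finset.range (2 * l + 1), (if m + 1 = j.1 then w (m + 1) else 0) = 0 := by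
            intro m _; rw [if_neg]; omega
          rw [Finset.sum_congr rfl this, Finset.sum_const_zero, hj0, hw0]
      rw [s1, s2]; ring
    rw [hsum, ← hrec j.1]
    simp

private lemma path_trig_sum (l : ℕ) (hl : 1 ≤ l) :
    ∑ h ∈ Finset.range (2 * l + 1), |2 * Real.cos ((h + 1) * π / (2 * l + 2))|
      = 2 * (Real.cot (π / (4 * l + 4)) - 1) := by
  have hπ : (0:ℝ) < π := Real.pi_pos
  set θ : ℝ := π / (2 * l + 2) with hθ
  have hden : (0:ℝ) < 2 * l + 2 := by positivity
  have hθpos : 0 < θ := by positivity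
  set f : ℕ → ℝ := fun h => |2 * Real.cos ((h + 1) * θ)| with hf
  have harg : ∀ h : ℕ, ((h:ℝ) + 1) * π / (2 * l + 2) = ((h:ℝ) + 1) * θ := by
    intro h; rw [hθ]; ring
  have hgoal1 : ∑ h ∈ Finset.range (2 * l + 1), |2 * Real.cos ((h + 1) * π / (2 * l + 2))|
      = ∑ h ∈ Finset.range (2 * l + 1), f h := by
    refine Finset.sum_congr rfl fun h _ => ?_
    rw [hf]; rw [harg h]
  rw [hgoal1]
  have hmid : f l = 0 := by
    have : ((l:ℝ) + 1) * θ = π / 2 := by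
      rw [hθ]; field_simp
    simp [hf, this]
  have hsplit : ∑ h ∈ Finset.range (2 * l + 1), f h
      = (∑ h ∈ Finset.range l, f h) + f l + ∑ h ∈ Finset.Ico (l + 1) (2 * l + 1), f h := by
    rw [Finset.range_eq_Ico,
      ← Finset.sum_Ico_consecutive f (Nat.zero_le (l+1)) (by omega : l + 1 ≤ 2 * l + 1),
      ← Finset.range_eq_Ico, Finset.sum_range_succ]
  have hrefl : ∑ h ∈ Finset.Ico (l + 1) (2 * l + 1), f h = ∑ h ∈ Finset.range l, f h := by
    rw [Finset.sum_Ico_eq_sum_range]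
    have : 2 * l + 1 - (l + 1) = l := by omega
    rw [this]
    rw [← Finset.sum_range_reflect (fun k => f (l + 1 + k)) l]
    refine Finset.sum_congr rfl fun k hk => ?_
    simp only [Finset.mem_range] at hk
    have hik : l + 1 + (l - 1 - k) = 2 * l - k := by omega
    rw [hik]
    simp only [hf]
    have hcast : ((2 * l - k : ℕ) : ℝ) = 2 * l - k := by
      push_cast [Nat.cast_sub (by omega : k ≤ 2 * l)]; ring
    have harg2 : (((2 * l - k : ℕ) : ℝ) + 1) * θ = π - ((k:ℝ) + 1) * θ := by
      rw [hcast, hθ]; field_simp; ring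
    rw [harg2, Real.cos_pi_sub]
    rw [mul_neg, abs_neg]
  have hpos : ∀ h ∈ Finset.range l, f h = 2 * Real.cos ((h + 1) * θ) := by
    intro h hh
    simp only [Finset.mem_range] at hh
    rw [hf]
    apply abs_of_nonneg
    have h1 : 0 ≤ ((h:ℝ) + 1) * θ := by positivity
    have h2 : ((h:ℝ) + 1) * θ ≤ π / 2 := by
      rw [hθ, mul_div_assoc', div_le_div_iff₀ hden (by norm_num : (0:ℝ) < 2)]
      have : (h:ℝ) + 1 ≤ l := by exact_mod_cast hh
      nlinarith
    have := Real.cos_nonneg_of_mem_Icc ⟨by linarith [Real.pi_pos], h2⟩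
    linarith
  have hsin : 0 < Real.sin (θ / 2) := by
    apply Real.sin_pos_of_pos_of_lt_pi (by positivity)
    have hl0 : (0:ℝ) ≤ l := Nat.cast_nonneg l
    rw [hθ, div_div]
    exact div_lt_self hπ (by nlinarith)
  have htel : (∑ h ∈ Finset.range l, f h) * Real.sin (θ / 2)
      = Real.cos (θ / 2) - Real.sin (θ / 2) := by
    rw [Finset.sum_congr rfl hpos, Finset.sum_mul]
    have : ∀ h ∈ Finset.range l, 2 * Real.cos (((h:ℝ) + 1) * θ) * Real.sin (θ / 2)
        = Real.sin (((h+1:ℕ):ℝ) * θ + θ / 2) - Real.sin (((h:ℕ):ℝ) * θ + θ / 2) := by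
      intro h _
      have e2 : ((h:ℝ)) * θ + θ / 2 = ((h:ℝ) + 1) * θ - θ / 2 := by ring
      push_cast
      rw [e2, Real.sin_add, Real.sin_sub]
      ring
    rw [Finset.sum_congr rfl this]
    rw [Finset.sum_range_sub (fun m => Real.sin ((m:ℝ) * θ + θ / 2))]
    have e3 : ((l:ℝ)) * θ + θ / 2 = π / 2 - θ / 2 := by
      rw [hθ]; field_simp; ring
    rw [e3, Real.sin_pi_div_two_sub]
    simp
  have hT : (∑ h ∈ Finset.range l, f h) = Real.cot (θ / 2) - 1 := by
    rw [Real.cot_eq_cos_div_sin]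
    field_simp
    linarith [htel]
  have hhalf : θ / 2 = π / (4 * l + 4) := by
    rw [hθ, div_div]; congr 1; ring
  rw [hsplit, hrefl, hmid, hT, hhalf]
  ring

/-- The energy of the path on `2l+1` vertices (sum of absolute values of the
eigenvalues of its adjacency matrix) equals `2(cot(π/(4l+4)) − 1)`. -/
theorem path_energy (l : ℕ) (hl : 1 ≤ l)
    (A : Matrix (Fin (2 * l + 1)) (Fin (2 * l + 1)) ℝ)
    (hA : ∀ i j : Fin (2 * l + 1),
      A i j = if i.1 + 1 = j.1 ∨ j.1 + 1 = i.1 then 1 else 0)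
    (hH : A.IsHermitian) :
    ∑ i, |hH.eigenvalues i| = 2 * (Real.cot (π / (4 * l + 4)) - 1) := by
  set lam : Fin (2 * l + 1) → ℝ :=
    fun i => 2 * Real.cos (((i.1 + 1 : ℕ) : ℝ) * π / (2 * l + 2)) with hlam
  have hπ : (0:ℝ) < π := Real.pi_pos
  have hden : (0:ℝ) < 2 * l + 2 := by positivity
  -- each lam i is an eigenvalue
  have hex : ∀ i : Fin (2 * l + 1), ∃ j, hH.eigenvalues j = lam i := by
    intro i
    obtain ⟨v, hv, hmv⟩ := path_eigenvector l hl A hA (i.1 + 1) (by omega) (by omega)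
    have hdet0 : ((lam i) • (1 : Matrix _ _ ℝ) - A).det = 0 := by
      rw [← Matrix.exists_mulVec_eq_zero_iff]
      exact ⟨v, hv, by simpa [hlam] using hmv⟩
    rw [path_det_eq_prod A hH (lam i)] at hdet0
    obtain ⟨j, -, hj⟩ := Finset.prod_eq_zero_iff.mp hdet0
    exact ⟨j, by linarith [sub_eq_zero.mp hj]⟩
  -- lam is injective
  have hinj : Function.Injective lam := by
    intro i i' hii
    have hcos : Real.cos (((i.1 + 1 : ℕ) : ℝ) * π / (2 * l + 2))
        = Real.cos (((i'.1 + 1 : ℕ) : ℝ) * π / (2 * l + 2)) := by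
      simp only [hlam] at hii; linarith
    have hmem : ∀ m : Fin (2 * l + 1),
        ((m.1 + 1 : ℕ) : ℝ) * π / (2 * l + 2) ∈ Set.Icc 0 π := by
      intro m
      constructor
      · positivity
      · rw [div_le_iff₀ hden]
        have : ((m.1 + 1 : ℕ) : ℝ) ≤ 2 * l + 1 := by exact_mod_cast m.2
        nlinarith
    have := Real.injOn_cos (hmem i) (hmem i') hcos
    field_simp at this
    exact Fin.ext (by have := (by exact_mod_cast this : i.1 + 1 = i'.1 + 1); omega)
  -- choose the bijection
  choose g hg using hex
  have hginj : Function.Injective g := by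
    intro i i' hii
    apply hinj
    rw [← hg i, ← hg i', hii]
  have hgbij : Function.Bijective g := (Finite.injective_iff_bijective).mp hginj
  have hsum : ∑ i, |hH.eigenvalues i| = ∑ i, |lam i| := by
    rw [← hgbij.sum_comp (fun j => |hH.eigenvalues j|)]
    exact Finset.sum_congr rfl fun i _ => by rw [hg i]
  rw [hsum]
  have hfin : ∑ i : Fin (2 * l + 1), |lam i|
      = ∑ h ∈ Finset.range (2 * l + 1), |2 * Real.cos (((h:ℝ) + 1) * π / (2 * l + 2))| := by
    rw [Fin.sum_univ_eq_sum_range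
      (fun h => |2 * Real.cos (((h + 1 : ℕ) : ℝ) * π / (2 * l + 2))|) (2 * l + 1)]
    refine Finset.sum_congr rfl fun h _ => ?_
    norm_num
  rw [hfin, path_trig_sum l hl]
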